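/- Measuring the number of nonzero registers splits a 'Rep' state correctly: let |φ⟩ ⊥ |0⟩ be unit vectors, b = b₁+b₂, and |Rep(b,c,φ)⟩ = C(b,c)^{−1/2} Σ_{S⊆[b],|S|=c} ⊗_i(𝟙[i∉S]|0⟩ − 𝟙[i∈S]|φ⟩). Then |Rep(b,c,φ)⟩ = Σ_{c₁=0}^{c} √(C(b₁,c₁)C(b₂,c−c₁)/C(b,c)) |Rep(b₁,c₁,φ)⟩ ⊗ |Rep(b₂,c−c₁,φ)⟩, and consequently applying to E_{c←Binomial(b,1/2)}[|Rep(b,c,φ)⟩⟨Rep(b,c,φ)|] the projective measurement counting nonzero positions among the first b₁ registers yields the state E_{c₁←Binomial(b₁,1/2), c₂←Binomial(b₂,1/2)}[|Rep(b₁,c₁,φ)⟩⟨Rep(b₁,c₁,φ)| ⊗ |Rep(b₂,c₂,φ)⟩⟨Rep(b₂,c₂,φ)|]. -/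

import Mathlib

open Finset

noncomputable section

/-- Sesquilinear inner product on `α → ℂ`. -/
def dotC {α : Type} [Fintype α] (u v : α → ℂ) : ℂ :=
  ∑ i, (starRingEnd ℂ) (u i) * v i

/-- Tensor product of the site vectors `v i`. -/
def tprodF {ι : Type} [Fintype ι] {d : ℕ} (v : ι → Fin d → ℂ) :
    (ι → Fin d) → ℂ :=
  fun f => ∏ i, v i (f i)

/-- Outer product `|u⟩⟨v|` realized as a kernel. -/
def outerF {α : Type} (u v : α → ℂ) : α × α → ℂ :=
  fun p => u p.1 * (starRingEnd ℂ) (v p.2)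

/-- `|Rep(b,c,φ)⟩ = C(b,c)^{-1/2} Σ_{S⊆[b],|S|=c} ⊗ᵢ(𝟙[i∉S]|0⟩ - 𝟙[i∈S]|φ⟩)`. -/
def repVec (b d : ℕ) (e0 φ : Fin d → ℂ) (c : ℕ) : (Fin b → Fin d) → ℂ :=
  ((Real.sqrt (b.choose c) : ℂ))⁻¹ •
    ∑ S ∈ powersetCard c (univ : Finset (Fin b)),
      tprodF (fun i => if i ∈ S then -φ else e0)

/-- `|Rep(b₁+b₂,c,φ)⟩` realized on the split register `Fin b₁ ⊕ Fin b₂`. -/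
def repVecSum (b₁ b₂ d : ℕ) (e0 φ : Fin d → ℂ) (c : ℕ) :
    ((Fin b₁ ⊕ Fin b₂) → Fin d) → ℂ :=
  ((Real.sqrt ((b₁ + b₂).choose c) : ℂ))⁻¹ •
    ∑ S ∈ powersetCard c (univ : Finset (Fin b₁ ⊕ Fin b₂)),
      tprodF (fun i => if i ∈ S then -φ else e0)

/-- Tensor product along the `Fin b₁ ⊕ Fin b₂` register decomposition. -/
def tensF {b₁ b₂ d : ℕ} (u : (Fin b₁ → Fin d) → ℂ) (w : (Fin b₂ → Fin d) → ℂ) :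
    ((Fin b₁ ⊕ Fin b₂) → Fin d) → ℂ :=
  fun v => u (fun i => v (Sum.inl i)) * w (fun i => v (Sum.inr i))

lemma tensF_smul_left {b₁ b₂ d : ℕ} (a : ℂ) (u : (Fin b₁ → Fin d) → ℂ)
    (w : (Fin b₂ → Fin d) → ℂ) : tensF (a • u) w = a • tensF u w := by
  funext v; simp [tensF, mul_assoc]

lemma tensF_smul_right {b₁ b₂ d : ℕ} (a : ℂ) (u : (Fin b₁ → Fin d) → ℂ)
    (w : (Fin b₂ → Fin d) → ℂ) : tensF u (a • w) = a • tensF u w := by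
  funext v; simp [tensF]; ring

lemma tensF_sum_left {α : Type} {b₁ b₂ d : ℕ} (s : Finset α)
    (u : α → (Fin b₁ → Fin d) → ℂ) (w : (Fin b₂ → Fin d) → ℂ) :
    tensF (∑ x ∈ s, u x) w = ∑ x ∈ s, tensF (u x) w := by
  funext v; simp [tensF, Finset.sum_apply, Finset.sum_mul]

lemma tensF_sum_right {α : Type} {b₁ b₂ d : ℕ} (s : Finset α)
    (u : (Fin b₁ → Fin d) → ℂ) (w : α → (Fin b₂ → Fin d) → ℂ) :
    tensF u (∑ x ∈ s, w x) = ∑ x ∈ s, tensF u (w x) := by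
  funext v; simp [tensF, Finset.sum_apply, Finset.mul_sum]

lemma tprodF_split {b₁ b₂ d : ℕ} (g : (Fin b₁ ⊕ Fin b₂) → Fin d → ℂ) :
    tprodF g = tensF (tprodF fun a => g (Sum.inl a)) (tprodF fun a => g (Sum.inr a)) := by
  funext v; simp [tprodF, tensF, Fintype.prod_sum_type]

lemma sum_powersetCard_sumType {b₁ b₂ : ℕ} {M : Type} [AddCommMonoid M] (c : ℕ)
    (F : Finset (Fin b₁) → Finset (Fin b₂) → M) :
    ∑ S ∈ powersetCard c (univ : Finset (Fin b₁ ⊕ Fin b₂)), F S.toLeft S.toRight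
      = ∑ c₁ ∈ range (c + 1), ∑ S₁ ∈ powersetCard c₁ (univ : Finset (Fin b₁)),
          ∑ S₂ ∈ powersetCard (c - c₁) (univ : Finset (Fin b₂)), F S₁ S₂ := by
  have h : ∀ c₁ ∈ range (c + 1),
      (∑ S₁ ∈ powersetCard c₁ (univ : Finset (Fin b₁)),
        ∑ S₂ ∈ powersetCard (c - c₁) (univ : Finset (Fin b₂)), F S₁ S₂)
      = ∑ p ∈ powersetCard c₁ (univ : Finset (Fin b₁)) ×ˢ
          powersetCard (c - c₁) (univ : Finset (Fin b₂)), F p.1 p.2 :=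
    fun c₁ _ => by rw [Finset.sum_product]
  rw [Finset.sum_congr rfl h]
  conv_rhs => rw [Finset.sum_sigma']
  refine Finset.sum_nbij' (fun S => ⟨S.toLeft.card, (S.toLeft, S.toRight)⟩)
    (fun p => p.2.1.disjSum p.2.2) ?_ ?_ ?_ ?_ ?_
  · intro S hS
    rw [mem_powersetCard_univ] at hS
    have h1 := Finset.card_toLeft_add_card_toRight (u := S)
    simp only [Finset.mem_sigma, Finset.mem_range, Finset.mem_product,
      mem_powersetCard_univ]
    exact ⟨by omega, trivial, by omega⟩
  · rintro ⟨c₁, S₁, S₂⟩ hp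
    simp only [Finset.mem_sigma, Finset.mem_range, Finset.mem_product,
      mem_powersetCard_univ] at hp
    show (S₁.disjSum S₂) ∈ _
    rw [mem_powersetCard_univ, Finset.card_disjSum]
    omega
  · intro S _; exact Finset.toLeft_disjSum_toRight
  · rintro ⟨c₁, S₁, S₂⟩ hp
    simp only [Finset.mem_sigma, Finset.mem_range, Finset.mem_product,
      mem_powersetCard_univ] at hp
    simp [hp.2.1]
  · intro S _; rfl

lemma scalar_eq {x y z : ℕ} (hx : 0 < x) (hy : 0 < y) (hz : 0 < z) :
    ((Real.sqrt z : ℂ))⁻¹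
      = ((Real.sqrt ((x : ℝ) * (y : ℝ) / (z : ℝ)) : ℂ)) *
        (((Real.sqrt x : ℂ))⁻¹ * ((Real.sqrt y : ℂ))⁻¹) := by
  have hx' : (0:ℝ) < Real.sqrt x := Real.sqrt_pos.2 (by exact_mod_cast hx)
  have hy' : (0:ℝ) < Real.sqrt y := Real.sqrt_pos.2 (by exact_mod_cast hy)
  have hz' : (0:ℝ) < Real.sqrt z := Real.sqrt_pos.2 (by exact_mod_cast hz)
  have h1 : (Real.sqrt x : ℂ) ≠ 0 := by exact_mod_cast hx'.ne'
  have h2 : (Real.sqrt y : ℂ) ≠ 0 := by exact_mod_cast hy'.ne'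
  have h3 : (Real.sqrt z : ℂ) ≠ 0 := by exact_mod_cast hz'.ne'
  rw [Real.sqrt_div (by positivity), Real.sqrt_mul (by positivity)]
  push_cast
  field_simp

lemma sum_triangle_eq {M : Type} [AddCommMonoid M] (b₁ b₂ : ℕ) (G : ℕ → ℕ → M)
    (hx : ∀ x y, b₁ < x → G x y = 0) (hy : ∀ x y, b₂ < y → G x y = 0) :
    ∑ c ∈ range (b₁ + b₂ + 1), ∑ c₁ ∈ range (c + 1), G c₁ (c - c₁)
      = ∑ c₁ ∈ range (b₁ + 1), ∑ c₂ ∈ range (b₂ + 1), G c₁ c₂ := by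
  rw [Finset.sum_sigma']
  have step1 : ∑ p ∈ (range (b₁ + b₂ + 1)).sigma (fun c => range (c + 1)),
      G p.2 (p.1 - p.2)
      = ∑ p ∈ ((range (b₁ + b₂ + 1)) ×ˢ (range (b₁ + b₂ + 1))).filter
          (fun p => p.1 + p.2 ≤ b₁ + b₂), G p.1 p.2 := by
    refine Finset.sum_nbij' (fun p => (p.2, p.1 - p.2)) (fun p => ⟨p.1 + p.2, p.1⟩)
      ?_ ?_ ?_ ?_ ?_
    · rintro ⟨c, c₁⟩ hp
      simp only [Finset.mem_sigma, Finset.mem_range] at hp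
      simp only [Finset.mem_filter, Finset.mem_product, Finset.mem_range]
      omega
    · rintro ⟨x, y⟩ hp
      simp only [Finset.mem_filter, Finset.mem_product, Finset.mem_range] at hp
      simp only [Finset.mem_sigma, Finset.mem_range]
      omega
    · rintro ⟨c, c₁⟩ hp
      simp only [Finset.mem_sigma, Finset.mem_range] at hp
      have : c₁ + (c - c₁) = c := by omega
      simp [this]
    · rintro ⟨x, y⟩ hp
      simp
    · rintro ⟨c, c₁⟩ hp; rfl
  rw [step1, Finset.sum_filter_of_ne (fun p _ hne => by
    by_contra h
    rcases Nat.lt_or_ge b₁ p.1 with h1 | h1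
    · exact hne (hx _ _ h1)
    · exact hne (hy _ _ (by omega))), Finset.sum_product]
  rw [show (∑ x ∈ range (b₁ + b₂ + 1), ∑ y ∈ range (b₁ + b₂ + 1), G x y)
      = ∑ x ∈ range (b₁ + 1), ∑ y ∈ range (b₁ + b₂ + 1), G x y from
    (Finset.sum_subset (Finset.range_subset_range.2 (by omega)) (fun x _ hxm =>
      Finset.sum_eq_zero fun y _ => hx x y (by simpa using hxm))).symm]
  refine Finset.sum_congr rfl fun x _ => ?_
  exact (Finset.sum_subset (Finset.range_subset_range.2 (by omega)) (fun y _ hym =>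
    hy x y (by simpa using hym))).symm

lemma tensF_zero_left {b₁ b₂ d : ℕ} (w : (Fin b₂ → Fin d) → ℂ) :
    tensF (0 : (Fin b₁ → Fin d) → ℂ) w = 0 := by
  funext v; simp [tensF]


/-- Counting nonzero registers splits a `Rep` state correctly:
`|Rep(b₁+b₂,c,φ)⟩ = Σ_{c₁} √(C(b₁,c₁)C(b₂,c-c₁)/C(b₁+b₂,c))
  |Rep(b₁,c₁,φ)⟩⊗|Rep(b₂,c-c₁,φ)⟩`, and consequently measuring the number of
nonzero positions among the first `b₁` registers of
`E_{c←Bin(b₁+b₂,1/2)}[|Rep(b₁+b₂,c,φ)⟩⟨…|]` yields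
`E_{c₁←Bin(b₁,1/2), c₂←Bin(b₂,1/2)}[|Rep(b₁,c₁,φ)⟩⟨…| ⊗ |Rep(b₂,c₂,φ)⟩⟨…|]`. -/
theorem repVec_split_and_measure (b₁ b₂ d : ℕ) (e0 φ : Fin d → ℂ)
    (h00 : dotC e0 e0 = 1) (hφφ : dotC φ φ = 1) (h0φ : dotC e0 φ = 0) :
    (∀ c : ℕ, c ≤ b₁ + b₂ →
      repVecSum b₁ b₂ d e0 φ c
        = ∑ c₁ ∈ range (c + 1),
            (Real.sqrt (((b₁.choose c₁ : ℝ) * (b₂.choose (c - c₁) : ℝ)) /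
                ((b₁ + b₂).choose c : ℝ)) : ℂ) •
              tensF (repVec b₁ d e0 φ c₁) (repVec b₂ d e0 φ (c - c₁))) ∧
    (∑ c ∈ range (b₁ + b₂ + 1), ∑ c₁ ∈ range (c + 1),
        ((((b₁ + b₂).choose c : ℝ) / 2 ^ (b₁ + b₂)) *
            (((b₁.choose c₁ : ℝ) * (b₂.choose (c - c₁) : ℝ)) /
              ((b₁ + b₂).choose c : ℝ))) •
          outerF (tensF (repVec b₁ d e0 φ c₁) (repVec b₂ d e0 φ (c - c₁)))
            (tensF (repVec b₁ d e0 φ c₁) (repVec b₂ d e0 φ (c - c₁)))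
      = ∑ c₁ ∈ range (b₁ + 1), ∑ c₂ ∈ range (b₂ + 1),
          (((b₁.choose c₁ : ℝ) / 2 ^ b₁) * ((b₂.choose c₂ : ℝ) / 2 ^ b₂)) •
            outerF (tensF (repVec b₁ d e0 φ c₁) (repVec b₂ d e0 φ c₂))
              (tensF (repVec b₁ d e0 φ c₁) (repVec b₂ d e0 φ c₂))) := by
  constructor
  · intro c hc
    rw [repVecSum]
    have hsplit : ∀ S : Finset (Fin b₁ ⊕ Fin b₂),
        tprodF (fun i => if i ∈ S then -φ else e0)
          = tensF (tprodF fun a => if a ∈ S.toLeft then -φ else e0)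
                  (tprodF fun a => if a ∈ S.toRight then -φ else e0) := by
      intro S
      rw [tprodF_split]
      congr 1 <;> funext a <;> simp
    rw [Finset.sum_congr rfl fun S _ => hsplit S,
      sum_powersetCard_sumType c (fun S₁ S₂ =>
        tensF (tprodF fun a => if a ∈ S₁ then -φ else e0)
              (tprodF fun a => if a ∈ S₂ then -φ else e0)),
      Finset.smul_sum]
    refine Finset.sum_congr rfl fun c₁ hc₁ => ?_
    rw [mem_range] at hc₁
    rw [Finset.sum_congr rfl fun S₁ _ => (tensF_sum_right _ _ _ :
        tensF (tprodF fun a => if a ∈ S₁ then -φ else e0)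
          (∑ S₂ ∈ powersetCard (c - c₁) (univ : Finset (Fin b₂)),
            tprodF fun a => if a ∈ S₂ then -φ else e0) = _).symm,
      ← tensF_sum_left]
    rw [repVec, repVec, tensF_smul_left, tensF_smul_right, smul_smul, smul_smul]
    by_cases h1 : b₁ < c₁
    · rw [Finset.powersetCard_eq_empty.2 (by simpa using h1), Finset.sum_empty,
        tensF_zero_left, smul_zero, smul_zero]
    · by_cases h2 : b₂ < c - c₁
      · have h2' : powersetCard (c - c₁) (univ : Finset (Fin b₂)) = ∅ :=
          Finset.powersetCard_eq_empty.2 (by simpa using h2)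
        rw [h2', Finset.sum_empty]
        have : ∀ u : (Fin b₁ → Fin d) → ℂ,
            tensF u (0 : (Fin b₂ → Fin d) → ℂ) = 0 := by
          intro u; funext v; simp [tensF]
        rw [this, smul_zero, smul_zero]
      · congr 1
        rw [scalar_eq (x := b₁.choose c₁) (y := b₂.choose (c - c₁))
          (z := (b₁ + b₂).choose c) (Nat.choose_pos (by omega))
          (Nat.choose_pos (by omega)) (Nat.choose_pos (by omega))]
        ring
  · have key := sum_triangle_eq b₁ b₂ (fun x y =>
      ((((b₁.choose x : ℝ) * (b₂.choose y : ℝ)) / 2 ^ (b₁ + b₂))) •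
        outerF (tensF (repVec b₁ d e0 φ x) (repVec b₂ d e0 φ y))
          (tensF (repVec b₁ d e0 φ x) (repVec b₂ d e0 φ y)))
      (fun x y hx => by simp [Nat.choose_eq_zero_of_lt hx])
      (fun x y hy => by simp [Nat.choose_eq_zero_of_lt hy])
    refine Eq.trans (Finset.sum_congr rfl fun c hc =>
      Finset.sum_congr rfl fun c₁ _ => ?_)
      (key.trans (Finset.sum_congr rfl fun x _ =>
        Finset.sum_congr rfl fun y _ => ?_))
    · rw [mem_range] at hc
      have hC : ((b₁ + b₂).choose c : ℝ) ≠ 0 := by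
        exact_mod_cast (Nat.choose_pos (by omega : c ≤ b₁ + b₂)).ne'
      congr 1
      field_simp
    · congr 1
      rw [pow_add, div_mul_div_comm]


end
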